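/- Let ℓ ≥ 1 and n ≥ 1. If a string x is generated by an SLP of size n, then x contains at most n·ℓ distinct contiguous substrings of length ℓ. -/

import Mathlib

/-- A rule of a straight-line program: either a terminal symbol, or the ordered
pair `(j, k)` of the indices of two strictly earlier rules to be concatenated. -/
inductive SLPRule (α : Type*) where
  | sym (a : α)
  | pair (j k : ℕ)

/-- A straight-line program (SLP) over the alphabet `α`: a finite sequence of
rules, where each pair rule may only reference strictly earlier rules. -/
structure SLP (α : Type*) where
  rules : List (SLPRule α)
  wf : ∀ i : Fin rules.length, match rules.get i with
    | .sym _ => True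
    | .pair j k => j < i.val ∧ k < i.val

/-- The size of an SLP is its number of rules. -/
def SLP.size {α : Type*} (G : SLP α) : ℕ := G.rules.length

/-- The list of the strings `eval(R_1), …, eval(R_n)` generated by the
successive rules of an SLP: a symbol rule evaluates to the corresponding
one-letter string, and a pair rule `(j, k)` evaluates to the concatenation
of the evaluations of the (earlier) rules `R_j` and `R_k`. -/
def SLP.evals {α : Type*} (G : SLP α) : List (List α) :=
  G.rules.foldl (fun acc r =>
    acc ++ [match r with
      | .sym a => [a]
      | .pair j k => acc.getD j [] ++ acc.getD k []]) []

/-- An SLP generates the string which its last rule evaluates to. -/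
def SLP.generates {α : Type*} (G : SLP α) (s : List α) : Prop :=
  G.evals.getLast? = some s

namespace SLPAux

variable {α : Type}

/-- One step of the `evals` fold. -/
def step (acc : List (List α)) (r : SLPRule α) : List (List α) :=
  acc ++ [match r with
    | .sym a => [a]
    | .pair j k => acc.getD j [] ++ acc.getD k []]

lemma evals_eq_foldl (G : SLP α) : G.evals = G.rules.foldl step [] := rfl

lemma prefix_foldl (l : List (SLPRule α)) (acc : List (List α)) :
    acc <+: l.foldl step acc := by
  induction l generalizing acc with
  | nil => exact List.prefix_rfl
  | cons r l ih =>
      rw [List.foldl_cons]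
      exact (List.prefix_append _ _).trans (ih (step acc r))

lemma length_foldl (l : List (SLPRule α)) (acc : List (List α)) :
    (l.foldl step acc).length = acc.length + l.length := by
  induction l generalizing acc with
  | nil => simp
  | cons r l ih =>
      rw [List.foldl_cons, ih]
      simp [step]
      omega

lemma getD_of_prefix {pre E : List (List α)} (h : pre <+: E) {j : ℕ}
    (hj : j < pre.length) : E.getD j [] = pre.getD j [] := by
  obtain ⟨t, rfl⟩ := h
  exact List.getD_append _ _ _ _ hj

lemma foldl_getD (l : List (SLPRule α)) (acc : List (List α)) (i : ℕ)
    (h : i < l.length) :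
    ∃ pre : List (List α), pre <+: l.foldl step acc ∧ pre.length = acc.length + i ∧
      (l.foldl step acc).getD (acc.length + i) [] =
        (match l[i] with
          | .sym a => [a]
          | .pair j k => pre.getD j [] ++ pre.getD k []) := by
  induction l generalizing acc i with
  | nil => simp at h
  | cons r l ih =>
      rw [List.foldl_cons]
      cases i with
      | zero =>
          refine ⟨acc, (List.prefix_append _ _).trans (prefix_foldl l (step acc r)), by simp, ?_⟩
          rw [Nat.add_zero, getD_of_prefix (prefix_foldl l (step acc r)) (by simp [step])]
          simp only [step]
          rw [List.getD_eq_getElem _ _ (by simp), List.getElem_append_right (Nat.le_refl _)]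
          simp only [Nat.sub_self, List.getElem_singleton, List.getElem_cons_zero]
      | succ i =>
          have h' : i < l.length := by simpa using h
          obtain ⟨pre, hpre, hlen, heq⟩ := ih (step acc r) i h'
          refine ⟨pre, hpre, by simp [step] at hlen ⊢; omega, ?_⟩
          have harith : acc.length + (i + 1) = (step acc r).length + i := by
            simp [step]; omega
          rw [harith, heq]
          congr 1

lemma evals_length (G : SLP α) : G.evals.length = G.size := by
  rw [evals_eq_foldl, length_foldl]; simp [SLP.size]

/-- The key recurrence for `evals`. -/
lemma evals_getD (G : SLP α) (i : ℕ) (h : i < G.size) :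
    G.evals.getD i [] =
      (match G.rules[i]'h with
        | .sym a => [a]
        | .pair j k => G.evals.getD j [] ++ G.evals.getD k []) := by
  obtain ⟨pre, hpre, hlen, heq⟩ := foldl_getD G.rules [] i h
  simp only [List.length_nil, Nat.zero_add] at heq hlen
  rw [show (List.foldl step [] G.rules) = G.evals from rfl] at heq
  rw [heq]
  have hlt : i < G.rules.length := h
  have hwf := G.wf ⟨i, hlt⟩
  simp only [List.get_eq_getElem] at hwf
  cases hrule : G.rules[i]'h with
  | sym a => rfl
  | pair j k =>
      have hrule' : G.rules[i]'hlt = _ := hrule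
      rw [hrule'] at hwf
      have hjk : j < i ∧ k < i := hwf
      show pre.getD j [] ++ pre.getD k [] = G.evals.getD j [] ++ G.evals.getD k []
      rw [show G.evals = List.foldl step [] G.rules from rfl,
        getD_of_prefix hpre (by omega), getD_of_prefix hpre (by omega)]

/-- The `d`-th window of length `ℓ` crossing the junction of the two parts of
rule `i` (or the single letter, for a symbol rule). -/
def win (G : SLP α) (ℓ i d : ℕ) : List α :=
  match G.rules.getD i (.pair 0 0) with
  | .sym a => [a]
  | .pair j k =>
      ((G.evals.getD j [] ++ G.evals.getD k []).drop
        ((G.evals.getD j []).length - d)).take ℓ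

lemma key (G : SLP α) (ℓ : ℕ) (hℓ : 1 ≤ ℓ) :
    ∀ i, i < G.size → ∀ p, p + ℓ ≤ (G.evals.getD i []).length →
      ∃ i' < G.size, ∃ d < ℓ,
        ((G.evals.getD i []).drop p).take ℓ = win G ℓ i' d := by
  intro i
  induction i using Nat.strong_induction_on with
  | _ i IH =>
      intro hi p hp
      have hi' : i < G.rules.length := hi
      have hwf := G.wf ⟨i, hi'⟩
      simp only [List.get_eq_getElem] at hwf
      have hget : G.rules.getD i (.pair 0 0) = G.rules[i]'hi :=
        List.getD_eq_getElem _ _ hi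
      rw [evals_getD G i hi] at hp ⊢
      cases hrule : G.rules[i]'hi with
      | sym a =>
          have hrule' : G.rules[i]'hi' = _ := hrule
          rw [hrule'] at hwf
          rw [hrule] at hp
          have hp' : p + ℓ ≤ 1 := hp
          have hp0 : p = 0 := by omega
          have hℓ1 : ℓ = 1 := by omega
          refine ⟨i, hi, 0, by omega, ?_⟩
          subst hp0 hℓ1
          have hwin : win G 1 i 0 = [a] := by
            unfold win
            rw [hget, hrule]
          rw [hwin]
          simp
      | pair j k =>
          have hrule' : G.rules[i]'hi' = _ := hrule
          rw [hrule'] at hwf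
          rw [hrule] at hp
          have hjk : j < i ∧ k < i := hwf
          have hp' : p + ℓ ≤ (G.evals.getD j [] ++ G.evals.getD k []).length := hp
          suffices hs : ∃ i' < G.size, ∃ d < ℓ,
              ((G.evals.getD j [] ++ G.evals.getD k []).drop p).take ℓ = win G ℓ i' d by
            exact hs
          set u := G.evals.getD j [] with hu
          set v := G.evals.getD k [] with hv
          simp only [List.length_append] at hp'
          rcases le_or_gt (p + ℓ) u.length with hcase | hcase
          · -- entirely inside u
            have hdrop : (u ++ v).drop p = u.drop p ++ v :=
              List.drop_append_of_le_length (by omega)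
            have htake : (u.drop p ++ v).take ℓ = (u.drop p).take ℓ :=
              List.take_append_of_le_length (by simp; omega)
            rw [hdrop, htake]
            exact IH j hjk.1 (hjk.1.trans hi) p (by rw [← hu]; omega)
          · rcases le_or_gt u.length p with hcase2 | hcase2
            · -- entirely inside v
              have hdrop : (u ++ v).drop p = v.drop (p - u.length) := by
                conv_lhs => rw [show p = u.length + (p - u.length) by omega]
                exact List.drop_length_add_append _
              rw [hdrop]
              exact IH k hjk.2 (hjk.2.trans hi) (p - u.length) (by rw [← hv]; omega)
            · -- crossing
              refine ⟨i, hi, u.length - p, by omega, ?_⟩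
              have hwin : win G ℓ i (u.length - p) =
                  ((u ++ v).drop (u.length - (u.length - p))).take ℓ := by
                unfold win
                rw [hget, hrule]
              rw [hwin, show u.length - (u.length - p) = p by omega]

end SLPAux

theorem stmt7 {α : Type} (ℓ n : ℕ) (hℓ : 1 ≤ ℓ) (hn : 1 ≤ n)
    (G : SLP α) (hsize : G.size = n) (x : List α) (hgen : G.generates x) :
    {w : List α | w.length = ℓ ∧ w <:+: x}.ncard ≤ n * ℓ := by
  classical
  have hlen : G.evals.length = n := by rw [SLPAux.evals_length, hsize]
  have hn1 : n - 1 < G.size := by omega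
  have hx : x = G.evals.getD (n - 1) [] := by
    rw [SLP.generates, List.getLast?_eq_getElem?, hlen] at hgen
    have h1 : n - 1 < G.evals.length := by omega
    rw [List.getD_eq_getElem _ _ h1]
    rw [List.getElem?_eq_getElem h1] at hgen
    exact (Option.some_inj.mp hgen).symm
  set F : Finset (List α) := (Finset.range n).biUnion
    (fun i => (Finset.range ℓ).image (SLPAux.win G ℓ i)) with hF
  have hsub : {w : List α | w.length = ℓ ∧ w <:+: x} ⊆ ↑F := by
    rintro w ⟨hwl, s, t, hst⟩
    have hxw : (x.drop s.length).take ℓ = w := by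
      rw [← hst, show s ++ w ++ t = s ++ (w ++ t) from (List.append_assoc s w t),
        List.drop_left, ← hwl, List.take_left]
    have hb : s.length + ℓ ≤ x.length := by
      rw [← hst]; simp; omega
    obtain ⟨i', hi', d, hd, heq⟩ :=
      SLPAux.key G ℓ hℓ (n - 1) hn1 s.length (by rw [← hx]; exact hb)
    rw [← hx, hxw] at heq
    simp only [hF, Finset.coe_biUnion, Finset.mem_coe, Finset.mem_range,
      Set.mem_iUnion, Finset.mem_image]
    exact ⟨i', by rw [hsize] at hi'; simpa using hi', d, by simpa using hd, heq.symm⟩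
  calc {w : List α | w.length = ℓ ∧ w <:+: x}.ncard ≤ (↑F : Set (List α)).ncard :=
        Set.ncard_le_ncard hsub F.finite_toSet
    _ = F.card := Set.ncard_coe_finset F
    _ ≤ ∑ i ∈ Finset.range n, ((Finset.range ℓ).image (SLPAux.win G ℓ i)).card :=
        Finset.card_biUnion_le
    _ ≤ ∑ _i ∈ Finset.range n, ℓ :=
        Finset.sum_le_sum (fun i _ => (Finset.card_image_le).trans_eq (Finset.card_range ℓ))
    _ = n * ℓ := by simp [Finset.sum_const, mul_comm]
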